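/- In the setting of Lemma sum-of-two-Gaussians: if for every bounded continuous $f$, $\mathbb{E}[f(X_n)\mid Z_n] \to \int f\, d\Phi_\sigma$ almost surely, and $\mathbb{E}[g(Y_n)] \to \int g\, d\Phi_\tau$ for every bounded continuous $g$ with $Y_n$ measurable with respect to $\sigma(Z_n)$, then for all bounded continuous $f, g$: $\mathbb{E}[f(X_n) g(Y_n)] \to \int f\, d\Phi_\sigma \cdot \int g\, d\Phi_\tau$, i.e.\ $(X_n, Y_n)$ converges in distribution to a pair of independent $N(0,\sigma^2)$ and $N(0,\tau^2)$ variables. -/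

import Mathlib

open MeasureTheory ProbabilityTheory Filter

/-- If `Y n = g n (Z n)`, the conditional law of `X n` given `Z n` converges weakly to
`N(0, σ²)` almost surely, and `Y n` converges in distribution to `N(0, τ²)`, then for all
bounded continuous `f, g`: `E[f(Xₙ) g(Yₙ)] → ∫ f dΦ_σ ⬝ ∫ g dΦ_τ`, i.e. `(Xₙ, Yₙ)` converges in
distribution to a pair of independent `N(0,σ²)` and `N(0,τ²)` variables. -/
theorem asymptotic_independence_of_conditional_gaussian {Ω β : Type*} [MeasurableSpace Ω]
    [MeasurableSpace β] (μ : Measure Ω) [IsProbabilityMeasure μ]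
    (X : ℕ → Ω → ℝ) (Z : ℕ → Ω → β) (g : ℕ → β → ℝ) (σ τ : NNReal)
    (hX : ∀ n, Measurable (X n)) (hZ : ∀ n, Measurable (Z n)) (hg : ∀ n, Measurable (g n))
    (hcond : ∀ᵐ ω ∂μ, ∀ f : BoundedContinuousFunction ℝ ℝ,
      Tendsto (fun n => (μ[(fun ω' => f (X n ω')) |
          MeasurableSpace.comap (Z n) inferInstance]) ω)
        atTop (nhds (∫ x, f x ∂(gaussianReal 0 (σ ^ 2)))))
    (hY : ∀ f : BoundedContinuousFunction ℝ ℝ,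
      Tendsto (fun n => ∫ ω, f (g n (Z n ω)) ∂μ) atTop
        (nhds (∫ x, f x ∂(gaussianReal 0 (τ ^ 2))))) :
    ∀ f h : BoundedContinuousFunction ℝ ℝ,
      Tendsto (fun n => ∫ ω, f (X n ω) * h (g n (Z n ω)) ∂μ) atTop
        (nhds ((∫ x, f x ∂(gaussianReal 0 (σ ^ 2))) *
               (∫ x, h x ∂(gaussianReal 0 (τ ^ 2))))) := by
  intro f h
  set I : ℝ := ∫ x, f x ∂(gaussianReal 0 (σ ^ 2)) with hI
  set m : ℕ → MeasurableSpace Ω := fun n => MeasurableSpace.comap (Z n) inferInstance with hmdef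
  have hm : ∀ n, m n ≤ ‹MeasurableSpace Ω› := fun n => (hZ n).comap_le
  have hsf : ∀ n, SigmaFinite (μ.trim (hm n)) := fun n => by
    have : IsFiniteMeasure (μ.trim (hm n)) := isFiniteMeasure_trim (hm n)
    infer_instance
  set c : ℕ → Ω → ℝ := fun n =>
    μ[(fun ω' => f (X n ω')) | MeasurableSpace.comap (Z n) inferInstance] with hc
  -- integrability facts
  have intf : ∀ n, Integrable (fun ω => f (X n ω)) μ := fun n => by
    refine Integrable.mono' (integrable_const ‖f‖)
      (f.continuous.measurable.comp (hX n)).aestronglyMeasurable ?_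
    exact Filter.Eventually.of_forall fun ω => f.norm_coe_le_norm _
  have hYmeas0 : ∀ n, Measurable (fun ω => h (g n (Z n ω))) := fun n =>
    h.continuous.measurable.comp ((hg n).comp (hZ n))
  have inth : ∀ n, Integrable (fun ω => h (g n (Z n ω))) μ := fun n => by
    refine Integrable.mono' (integrable_const ‖h‖) (hYmeas0 n).aestronglyMeasurable ?_
    exact Filter.Eventually.of_forall fun ω => h.norm_coe_le_norm _
  have intprod : ∀ n, Integrable (fun ω => h (g n (Z n ω)) * f (X n ω)) μ := fun n =>
    (intf n).bdd_mul (c := ‖h‖) (hYmeas0 n).aestronglyMeasurable (Filter.Eventually.of_forall fun ω => h.norm_coe_le_norm _)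
  have intc : ∀ n, Integrable (c n) μ := fun n => integrable_condExp
  -- m-measurability of h(Y n)
  have hYm : ∀ n, StronglyMeasurable[m n] (fun ω => h (g n (Z n ω))) := fun n => by
    have hZm : Measurable[m n] (Z n) := fun s hs => ⟨s, hs, rfl⟩
    exact (h.continuous.measurable.comp ((hg n).comp hZm)).stronglyMeasurable
  -- step 1: rewrite the integral via conditional expectation
  have key : ∀ n, ∫ ω, f (X n ω) * h (g n (Z n ω)) ∂μ
      = ∫ ω, h (g n (Z n ω)) * c n ω ∂μ := by
    intro n
    haveI := hsf n
    have e1 : ∫ ω, f (X n ω) * h (g n (Z n ω)) ∂μ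
        = ∫ ω, ((fun ω' => h (g n (Z n ω'))) * fun ω' => f (X n ω')) ω ∂μ := by
      simp [Pi.mul_apply, mul_comm]
    rw [e1, ← integral_condExp (hm n) (m := m n)]
    refine integral_congr_ae ?_
    have := condExp_mul_of_stronglyMeasurable_left (m := m n) (μ := μ) (hYm n) (intprod n) (intf n)
    exact this
  -- step 2: the centered integral tends to 0
  have hBnd : ∀ n, ∀ᵐ ω ∂μ, |c n ω| ≤ ‖f‖ := by
    intro n
    have : ∀ᵐ ω ∂μ, |f (X n ω)| ≤ (‖f‖₊ : ℝ) := by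
      refine Filter.Eventually.of_forall fun ω => ?_
      simpa [Real.norm_eq_abs] using f.norm_coe_le_norm (X n ω)
    have := ae_bdd_condExp_of_ae_bdd (m := m n) (R := ‖f‖₊) this
    simpa using this
  have hBtend : Tendsto (fun n => ∫ ω, |c n ω - I| ∂μ) atTop (nhds 0) := by
    have h0 : (0 : ℝ) = ∫ (_ : Ω), (0 : ℝ) ∂μ := by simp
    rw [h0]
    refine tendsto_integral_of_dominated_convergence (fun _ => ‖f‖ + |I|) ?_ ?_ ?_ ?_
    · exact fun n => ((stronglyMeasurable_condExp.mono (hm n)).measurable.sub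
        measurable_const).abs.aestronglyMeasurable
    · exact integrable_const _
    · intro n
      filter_upwards [hBnd n] with ω hω
      have : |c n ω - I| ≤ |c n ω| + |I| := abs_sub _ _
      calc ‖|c n ω - I|‖ = |c n ω - I| := by simp [abs_abs]
        _ ≤ |c n ω| + |I| := abs_sub _ _
        _ ≤ ‖f‖ + |I| := by linarith
    · filter_upwards [hcond] with ω hω
      have := (hω f).sub_const I
      simpa [sub_self, ← hI] using this.abs
  have hA : Tendsto (fun n => ∫ ω, h (g n (Z n ω)) * (c n ω - I) ∂μ) atTop (nhds 0) := by
    refine squeeze_zero_norm (a := fun n => ‖h‖ * ∫ ω, |c n ω - I| ∂μ) (fun n => ?_) ?_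
    · calc ‖∫ ω, h (g n (Z n ω)) * (c n ω - I) ∂μ‖
          ≤ ∫ ω, ‖h‖ * |c n ω - I| ∂μ := by
            refine norm_integral_le_of_norm_le (((intc n).sub (integrable_const I)).abs.const_mul _) ?_
            refine Filter.Eventually.of_forall fun ω => ?_
            rw [norm_mul, Real.norm_eq_abs (c n ω - I)]
            exact mul_le_mul_of_nonneg_right (h.norm_coe_le_norm _) (abs_nonneg _)
        _ = ‖h‖ * ∫ ω, |c n ω - I| ∂μ := integral_const_mul _ _
    · simpa using hBtend.const_mul ‖h‖
  -- step 3: combine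
  have decomp : ∀ n, ∫ ω, h (g n (Z n ω)) * c n ω ∂μ
      = (∫ ω, h (g n (Z n ω)) * (c n ω - I) ∂μ) + I * ∫ ω, h (g n (Z n ω)) ∂μ := by
    intro n
    have : ∀ ω, h (g n (Z n ω)) * c n ω
        = h (g n (Z n ω)) * (c n ω - I) + I * h (g n (Z n ω)) := by intro ω; ring
    rw [integral_congr_ae (Filter.Eventually.of_forall this), integral_add, integral_const_mul]
    · exact ((intc n).sub (integrable_const I)).bdd_mul
        (hYmeas0 n).aestronglyMeasurable (Filter.Eventually.of_forall fun ω => h.norm_coe_le_norm _)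
    · exact (inth n).const_mul _
  have final := hA.add ((hY h).const_mul I)
  rw [zero_add] at final
  have : (fun n => ∫ ω, f (X n ω) * h (g n (Z n ω)) ∂μ)
      = fun n => (∫ ω, h (g n (Z n ω)) * (c n ω - I) ∂μ) + I * ∫ ω, h (g n (Z n ω)) ∂μ := by
    funext n; rw [key n, decomp n]
  rw [this]
  exact final
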